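/- Suppose the pair (A, Δ_η) is η-robustly mixed (ℓ^q, ℓ^1)-instance optimal of order s with constants C, D relative to a norm ‖·‖ on ℂ^m. Then for every x ∈ ℂ^N and e ∈ ℂ^m, ‖x − Δ_η(Ax + e)‖_q ≤ C σ_s(x)_1 / s^(1−1/q) + s^(1/q−1/2) (D η + E max{‖e‖ − η, 0}), where E = max{C, 1} · Q_s(A)_{q,1}. -/

import Mathlib

open scoped ENNReal

noncomputable def lpNorm {n : ℕ} (p : ℝ) (x : Fin n → ℂ) : ℝ :=
  (∑ i, ‖x i‖ ^ p) ^ (1 / p)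

/-- Best `s`-term approximation error of `x` in the `ℓ^1` norm. -/
noncomputable def bestApprox1 {n : ℕ} (s : ℕ) (x : Fin n → ℂ) : ℝ :=
  sInf ((fun w => lpNorm 1 (x - w)) ''
    {w : Fin n → ℂ | ∃ S : Finset (Fin n), S.card ≤ s ∧ ∀ i ∉ S, w i = 0})

/-- Simultaneous `(ℓ^q, ℓ^1)`-quotient of order `s` of `A`, relative to `nn`
(`⊤` if some feasible set is empty). -/
noncomputable def quotSimul {m N : ℕ} (A : Matrix (Fin m) (Fin N) ℂ)
    (nn : (Fin m → ℂ) → ℝ) (q : ℝ) (s : ℕ) : ℝ≥0∞ :=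
  ⨆ e ∈ {e : Fin m → ℂ | e ≠ 0},
    ⨅ z ∈ {z : Fin N → ℂ | A.mulVec z = e},
      ENNReal.ofReal
        (((s : ℝ) ^ ((1 : ℝ) / 2 - 1 / q) * lpNorm q z
            + (s : ℝ) ^ (-(1 : ℝ) / 2) * lpNorm 1 z) / nn e)

lemma lpNorm_nonneg {n : ℕ} (p : ℝ) (x : Fin n → ℂ) : 0 ≤ lpNorm p x :=
  Real.rpow_nonneg
    (Finset.sum_nonneg fun i _ => Real.rpow_nonneg (norm_nonneg _) _) _

lemma lpNorm_neg {n : ℕ} (p : ℝ) (x : Fin n → ℂ) : lpNorm p (-x) = lpNorm p x := by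
  simp [lpNorm]

lemma lpNorm_triangle {n : ℕ} {q : ℝ} (hq : 1 ≤ q) (a b : Fin n → ℂ) :
    lpNorm q (a + b) ≤ lpNorm q a + lpNorm q b := by
  have hq0 : (0 : ℝ) ≤ q := le_trans zero_le_one hq
  unfold lpNorm
  calc (∑ i, ‖(a + b) i‖ ^ q) ^ (1 / q)
      ≤ (∑ i, (‖a i‖ + ‖b i‖) ^ q) ^ (1 / q) := by
        apply Real.rpow_le_rpow
          (Finset.sum_nonneg fun i _ => Real.rpow_nonneg (norm_nonneg _) _)
        · exact Finset.sum_le_sum fun i _ =>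
            Real.rpow_le_rpow (norm_nonneg _) (norm_add_le _ _) hq0
        · positivity
    _ ≤ _ := Real.Lp_add_le_of_nonneg (s := Finset.univ) (f := fun i => ‖a i‖) (g := fun i => ‖b i‖)
        hq (fun i _ => norm_nonneg _) (fun i _ => norm_nonneg _)

lemma sparseSet_mem_zero {n s : ℕ} :
    (0 : Fin n → ℂ) ∈ {w : Fin n → ℂ | ∃ S : Finset (Fin n), S.card ≤ s ∧ ∀ i ∉ S, w i = 0} :=
  ⟨∅, by simp⟩

lemma bestApprox1_nonneg {n : ℕ} (s : ℕ) (x : Fin n → ℂ) : 0 ≤ bestApprox1 s x := by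
  apply Real.sInf_nonneg
  rintro y ⟨w, -, rfl⟩
  exact lpNorm_nonneg _ _

lemma bestApprox1_add_le {n : ℕ} (s : ℕ) (x z : Fin n → ℂ) :
    bestApprox1 s (x + z) ≤ bestApprox1 s x + lpNorm 1 z := by
  have hbdd : BddBelow ((fun w => lpNorm 1 ((x + z) - w)) ''
      {w : Fin n → ℂ | ∃ S : Finset (Fin n), S.card ≤ s ∧ ∀ i ∉ S, w i = 0}) :=
    ⟨0, by rintro y ⟨w, -, rfl⟩; exact lpNorm_nonneg _ _⟩
  have hne : ((fun w => lpNorm 1 (x - w)) ''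
      {w : Fin n → ℂ | ∃ S : Finset (Fin n), S.card ≤ s ∧ ∀ i ∉ S, w i = 0}).Nonempty :=
    ⟨_, ⟨0, sparseSet_mem_zero, rfl⟩⟩
  rw [bestApprox1, bestApprox1, ← sub_le_iff_le_add]
  apply le_csInf hne
  rintro y ⟨w, hw, rfl⟩
  rw [sub_le_iff_le_add]
  calc sInf ((fun w => lpNorm 1 ((x + z) - w)) ''
        {w : Fin n → ℂ | ∃ S : Finset (Fin n), S.card ≤ s ∧ ∀ i ∉ S, w i = 0})
      ≤ lpNorm 1 ((x + z) - w) := csInf_le hbdd ⟨w, hw, rfl⟩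
    _ = lpNorm 1 ((x - w) + z) := by congr 1; abel
    _ ≤ lpNorm 1 (x - w) + lpNorm 1 z := lpNorm_triangle le_rfl _ _

set_option maxHeartbeats 1000000 in
/-- Robust instance optimality implies robustness to unknown error: if `(A, Δ)` is
`η`-robustly mixed `(ℓ^q, ℓ^1)`-instance optimal of order `s` with constants `C, D`,
then for every `x`, `e`, every `x' ∈ Δ(Ax + e)` satisfies
`‖x − x'‖_q ≤ C σ_s(x)₁ / s^(1−1/q) + s^(1/q−1/2) (D η + E max{‖e‖−η, 0})`
with `E = max{C,1} Q_s(A)_{q,1}`. -/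
theorem stmt6 {m N : ℕ} (A : Matrix (Fin m) (Fin N) ℂ)
    (nn : (Fin m → ℂ) → ℝ)
    (nn_add : ∀ x y, nn (x + y) ≤ nn x + nn y)
    (nn_smul : ∀ (c : ℂ) x, nn (c • x) = ‖c‖ * nn x)
    (nn_eq_zero : ∀ x, nn x = 0 ↔ x = 0)
    (η : ℝ) (hη : 0 ≤ η) (q : ℝ) (hq : 1 ≤ q)
    (s : ℕ) (hs : 1 ≤ s) (hsm : s ≤ m)
    (Δ : (Fin m → ℂ) → Set (Fin N → ℂ))
    (C D : ℝ) (hC : 0 < C) (hD : 0 < D)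
    -- η-robust mixed (ℓ^q, ℓ^1)-instance optimality of order s
    (hIO : ∀ x : Fin N → ℂ, ∀ e : Fin m → ℂ, nn e ≤ η →
      ∀ x' ∈ Δ (A.mulVec x + e),
        lpNorm q (x - x') ≤ C * (s : ℝ) ^ ((1 : ℝ) / q - 1) * bestApprox1 s x
          + D * (s : ℝ) ^ ((1 : ℝ) / q - 1 / 2) * η)
    (x : Fin N → ℂ) (e : Fin m → ℂ) (x' : Fin N → ℂ)
    (hx' : x' ∈ Δ (A.mulVec x + e)) :
    ENNReal.ofReal (lpNorm q (x - x')) ≤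
      ENNReal.ofReal (C * (s : ℝ) ^ ((1 : ℝ) / q - 1) * bestApprox1 s x
          + D * (s : ℝ) ^ ((1 : ℝ) / q - 1 / 2) * η)
      + ENNReal.ofReal ((s : ℝ) ^ ((1 : ℝ) / q - 1 / 2) * max C 1 * max (nn e - η) 0)
          * quotSimul A nn q s := by
  have hs0 : (0 : ℝ) < (s : ℝ) := by exact_mod_cast Nat.lt_of_lt_of_le Nat.zero_lt_one hs
  set a : ℝ := (1 : ℝ) / q - 1 with ha
  set b : ℝ := (1 : ℝ) / q - 1 / 2 with hb
  by_cases hcase : nn e ≤ η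
  · have h := hIO x e hcase x' hx'
    have h0 : max (nn e - η) 0 = 0 := max_eq_right (by linarith)
    rw [h0, mul_zero, ENNReal.ofReal_zero, zero_mul, add_zero]
    exact ENNReal.ofReal_le_ofReal h
  push_neg at hcase
  set M : ℝ := nn e - η with hMdef
  have hMpos : 0 < M := by simp [hMdef]; linarith
  have hMmax : max (nn e - η) 0 = M := max_eq_left hMpos.le
  rw [hMmax]
  set K : ℝ := (s : ℝ) ^ b * max C 1 with hK
  have hmax1 : (0:ℝ) < max C 1 := lt_of_lt_of_le one_pos (le_max_right _ _)
  have hKpos : 0 < K := mul_pos (Real.rpow_pos_of_pos hs0 _) hmax1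
  set A0 : ℝ := C * (s : ℝ) ^ a * bestApprox1 s x + D * (s : ℝ) ^ b * η with hA0
  rcases eq_or_ne (quotSimul A nn q s) ⊤ with htop | hfin
  · rw [htop, ENNReal.mul_top (by
      simp only [ne_eq, ENNReal.ofReal_eq_zero, not_le]
      exact mul_pos hKpos hMpos)]
    exact le_top.trans (le_add_self)
  -- main case
  apply ENNReal.le_of_forall_pos_le_add
  intro ε hε _
  set δ : ℝ := (ε : ℝ) / (K * M) with hδ
  have hδpos : 0 < δ := div_pos hε (mul_pos hKpos hMpos)
  have hnne : 0 < nn e := lt_of_le_of_lt hη hcase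
  have he0 : e ≠ 0 := fun h => by simp [h, (nn_eq_zero 0).2 rfl] at hnne
  -- split the error
  set c : ℂ := ((M / nn e : ℝ) : ℂ) with hc
  set e₂ : (Fin m → ℂ) := c • e with he₂def
  have hnne₂ : nn e₂ = M := by
    rw [he₂def, nn_smul, hc, Complex.norm_real, Real.norm_eq_abs,
      abs_of_pos (div_pos hMpos hnne), div_mul_cancel₀ _ hnne.ne']
  have he₂0 : e₂ ≠ 0 := fun h => by
    rw [h, (nn_eq_zero 0).2 rfl] at hnne₂; exact hMpos.ne hnne₂
  -- the infimum at e₂ is at most the quotient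
  set Q : ℝ≥0∞ := quotSimul A nn q s with hQ
  set Qr : ℝ := Q.toReal with hQr
  have hQr0 : 0 ≤ Qr := ENNReal.toReal_nonneg
  have hQQr : ENNReal.ofReal Qr = Q := ENNReal.ofReal_toReal hfin
  have hinf_le : (⨅ z ∈ {z : Fin N → ℂ | A.mulVec z = e₂},
      ENNReal.ofReal
        (((s : ℝ) ^ ((1 : ℝ) / 2 - 1 / q) * lpNorm q z
            + (s : ℝ) ^ (-(1 : ℝ) / 2) * lpNorm 1 z) / nn e₂)) ≤ Q := by
    rw [hQ, quotSimul]
    exact le_iSup₂ (f := fun (e' : Fin m → ℂ) (_ : e' ∈ {e : Fin m → ℂ | e ≠ 0}) =>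
      ⨅ z ∈ {z : Fin N → ℂ | A.mulVec z = e'},
        ENNReal.ofReal
          (((s : ℝ) ^ ((1 : ℝ) / 2 - 1 / q) * lpNorm q z
              + (s : ℝ) ^ (-(1 : ℝ) / 2) * lpNorm 1 z) / nn e')) e₂ he₂0
  have hinf_lt : (⨅ z ∈ {z : Fin N → ℂ | A.mulVec z = e₂},
      ENNReal.ofReal
        (((s : ℝ) ^ ((1 : ℝ) / 2 - 1 / q) * lpNorm q z
            + (s : ℝ) ^ (-(1 : ℝ) / 2) * lpNorm 1 z) / nn e₂)) < Q + ENNReal.ofReal δ :=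
    lt_of_le_of_lt hinf_le
      (ENNReal.lt_add_right hfin (by simp [ENNReal.ofReal_eq_zero, not_le, hδpos]))
  obtain ⟨z, hz, hzval⟩ : ∃ z, A.mulVec z = e₂ ∧
      ENNReal.ofReal
        (((s : ℝ) ^ ((1 : ℝ) / 2 - 1 / q) * lpNorm q z
            + (s : ℝ) ^ (-(1 : ℝ) / 2) * lpNorm 1 z) / nn e₂) < Q + ENNReal.ofReal δ := by
    simpa only [iInf_lt_iff, Set.mem_setOf_eq, exists_prop] using hinf_lt
  set V : ℝ := (s : ℝ) ^ ((1 : ℝ) / 2 - 1 / q) * lpNorm q z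
      + (s : ℝ) ^ (-(1 : ℝ) / 2) * lpNorm 1 z with hV
  have hVnonneg : 0 ≤ V :=
    add_nonneg (mul_nonneg (Real.rpow_pos_of_pos hs0 _).le (lpNorm_nonneg _ _))
      (mul_nonneg (Real.rpow_pos_of_pos hs0 _).le (lpNorm_nonneg _ _))
  have hVle : V ≤ (Qr + δ) * M := by
    have h1 : ENNReal.ofReal (V / nn e₂) < ENNReal.ofReal (Qr + δ) := by
      rwa [ENNReal.ofReal_add hQr0 hδpos.le, hQQr]
    have h2 : V / nn e₂ < Qr + δ :=
      (ENNReal.ofReal_lt_ofReal_iff (by linarith)).1 h1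
    rw [hnne₂] at h2
    nlinarith [(div_lt_iff₀ hMpos).1 h2]
  -- translation invariance
  have hmem : x' ∈ Δ (A.mulVec (x + z) + (e - e₂)) := by
    have : A.mulVec (x + z) + (e - e₂) = A.mulVec x + e := by
      rw [Matrix.mulVec_add, hz]; abel
    rwa [this]
  have hnn1 : nn (e - e₂) ≤ η := by
    have : e - e₂ = ((1 : ℂ) - c) • e := by rw [sub_smul, one_smul]
    rw [this, nn_smul]
    have hcc : (1 : ℂ) - c = ((η / nn e : ℝ) : ℂ) := by
      rw [hc]; push_cast
      rw [hMdef]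
      have hcne : ((nn e : ℂ)) ≠ 0 := by exact_mod_cast hnne.ne'
      field_simp
      push_cast; ring
    rw [hcc, Complex.norm_real, Real.norm_eq_abs, abs_of_nonneg (by positivity),
      div_mul_cancel₀ _ hnne.ne']
  have h1 := hIO (x + z) (e - e₂) hnn1 x' hmem
  have h2 : lpNorm q (x - x') ≤ lpNorm q ((x + z) - x') + lpNorm q z := by
    have hxx : x - x' = ((x + z) - x') + (-z) := by abel
    rw [hxx]
    calc lpNorm q (((x + z) - x') + (-z)) ≤ lpNorm q ((x + z) - x') + lpNorm q (-z) :=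
          lpNorm_triangle hq _ _
      _ = _ := by rw [lpNorm_neg]
  have h3 := bestApprox1_add_le s x z
  -- key combination
  have hspow : 0 < (s : ℝ) ^ a := Real.rpow_pos_of_pos hs0 _
  have hKV : C * (s : ℝ) ^ a * lpNorm 1 z + lpNorm q z ≤ K * V := by
    have e1 : (s : ℝ) ^ b * (s : ℝ) ^ ((1 : ℝ) / 2 - 1 / q) = 1 := by
      rw [← Real.rpow_add hs0, hb]
      norm_num
    have e2 : (s : ℝ) ^ b * (s : ℝ) ^ (-(1 : ℝ) / 2) = (s : ℝ) ^ a := by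
      rw [← Real.rpow_add hs0, hb, ha]
      ring_nf
    have hCle : C ≤ max C 1 := le_max_left _ _
    have h1le : (1 : ℝ) ≤ max C 1 := le_max_right _ _
    have hzq : 0 ≤ lpNorm q z := lpNorm_nonneg _ _
    have hz1 : 0 ≤ lpNorm 1 z := lpNorm_nonneg _ _
    calc C * (s : ℝ) ^ a * lpNorm 1 z + lpNorm q z
        ≤ max C 1 * ((s : ℝ) ^ a * lpNorm 1 z) + max C 1 * lpNorm q z := by
          nlinarith [mul_nonneg (mul_nonneg (sub_nonneg.2 hCle) hspow.le) hz1,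
            mul_nonneg (sub_nonneg.2 h1le) hzq]
      _ = K * V := by
          rw [hK, hV, mul_add, ← mul_assoc, ← mul_assoc, mul_comm ((s:ℝ)^b) (max C 1),
            mul_assoc (max C 1) ((s:ℝ)^b) ((s:ℝ)^((1:ℝ)/2 - 1/q)), e1,
            mul_assoc (max C 1) _ (lpNorm q z), mul_assoc (max C 1) ((s:ℝ)^b),
            ← mul_assoc ((s:ℝ)^b) ((s:ℝ)^(-(1:ℝ)/2)) (lpNorm 1 z), e2]
          ring
  have hmain : lpNorm q (x - x') ≤ A0 + K * M * (Qr + δ) := by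
    have h3' : C * (s : ℝ) ^ a * bestApprox1 s (x + z)
        ≤ C * (s : ℝ) ^ a * bestApprox1 s x + C * (s : ℝ) ^ a * lpNorm 1 z := by
      have := mul_le_mul_of_nonneg_left h3 (mul_pos hC hspow).le
      rw [mul_add] at this
      exact this
    have : lpNorm q (x - x') ≤ A0 + (C * (s : ℝ) ^ a * lpNorm 1 z + lpNorm q z) := by
      rw [hA0]
      linarith [h1, h2, h3']
    calc lpNorm q (x - x') ≤ A0 + (C * (s : ℝ) ^ a * lpNorm 1 z + lpNorm q z) := this
      _ ≤ A0 + K * V := by linarith [hKV]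
      _ ≤ A0 + K * ((Qr + δ) * M) :=
          add_le_add le_rfl (mul_le_mul_of_nonneg_left hVle hKpos.le)
      _ = A0 + K * M * (Qr + δ) := by ring
  -- pass to ENNReal
  have hA0nn : 0 ≤ A0 := by
    rw [hA0]
    have := bestApprox1_nonneg s x
    have hb0 : (0:ℝ) < (s:ℝ) ^ b := Real.rpow_pos_of_pos hs0 _
    positivity
  calc ENNReal.ofReal (lpNorm q (x - x'))
      ≤ ENNReal.ofReal (A0 + K * M * (Qr + δ)) := ENNReal.ofReal_le_ofReal hmain
    _ ≤ ENNReal.ofReal A0 + ENNReal.ofReal (K * M * (Qr + δ)) := ENNReal.ofReal_add_le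
    _ = ENNReal.ofReal A0 + ENNReal.ofReal (K * M) * ENNReal.ofReal (Qr + δ) := by
        rw [ENNReal.ofReal_mul (mul_pos hKpos hMpos).le]
    _ = ENNReal.ofReal A0 + ENNReal.ofReal (K * M) * (Q + ENNReal.ofReal δ) := by
        rw [ENNReal.ofReal_add hQr0 hδpos.le, hQQr]
    _ = (ENNReal.ofReal A0 + ENNReal.ofReal (K * M) * Q)
          + ENNReal.ofReal (K * M) * ENNReal.ofReal δ := by ring
    _ ≤ (ENNReal.ofReal A0 + ENNReal.ofReal (K * M) * Q) + ε := by
        apply add_le_add le_rfl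
        rw [← ENNReal.ofReal_mul (mul_pos hKpos hMpos).le, hδ,
          mul_div_cancel₀ _ (mul_pos hKpos hMpos).ne']
        simp
    _ = (ENNReal.ofReal A0 + ENNReal.ofReal (K * M) * quotSimul A nn q s) + ε := by rw [hQ]
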